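/- For every positive odd integer m, binom_{q^2}(m-1, (m-1)/2) ≡ (-1)^{(m-1)/2} q^{(1-m^2)/4} (-q;q)_{m-1}^2 (mod Φ_m(q)^2), where the congruence is understood in ℚ(q): the reduced numerator of the difference is divisible by Φ_m(q)^2 and the reduced denominator is coprime to Φ_m(q). Note (1-m^2)/4 is a negative integer for m ≥ 3 so q^{(1-m^2)/4} ∈ ℚ(q). -/

import Mathlib

open Polynomial Finset

noncomputable def q : RatFunc ℚ := RatFunc.X

/-- `qpoch a b m = (a;b)_m = ∏_{j=0}^{m-1} (1 - a b^j)`. -/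
noncomputable def qpoch (a b : RatFunc ℚ) (m : ℕ) : RatFunc ℚ :=
  ∏ j ∈ Finset.range m, (1 - a * b ^ j)

/-- The q-integer `[m] = (1-q^m)/(1-q)` for any integer `m`. -/
noncomputable def qint (m : ℤ) : RatFunc ℚ := (1 - q ^ m) / (1 - q)

/-- Gaussian binomial coefficient in base `b`. -/
noncomputable def qbin (b : RatFunc ℚ) (M N : ℕ) : RatFunc ℚ :=
  if N ≤ M then qpoch b b M / (qpoch b b N * qpoch b b (M - N)) else 0

/-- `C2 a = a(a-1)/2`. -/
def C2 (a : ℤ) : ℤ := a * (a - 1) / 2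

/-- The polynomial `[n] = 1 + q + ... + q^{n-1}` in `ℚ[q]`. -/
noncomputable def qnPoly (n : ℕ) : Polynomial ℚ := ∑ i ∈ Finset.range n, X ^ i

/-- Congruence of rational functions modulo a polynomial: the reduced numerator of the
difference is divisible by `P` and the reduced denominator is coprime to `P`. -/
def congrMod (x y : RatFunc ℚ) (P : Polynomial ℚ) : Prop :=
  P ∣ (x - y).num ∧ IsCoprime ((x - y).denom) P

/- ### Auxiliary material -/

noncomputable def Af (j : ℕ) : Polynomial ℚ := 1 - X ^ (2*j+2)
noncomputable def Cf (j : ℕ) : Polynomial ℚ := 1 - X ^ (2*j+1)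
noncomputable def eps (n : ℕ) : Polynomial ℚ := 1 - X ^ (2*n+1)

lemma exp_lemma {R : Type*} [CommRing R] (s : Finset ℕ) (a b : ℕ → R) (t : R) :
    ∃ u, ∏ i ∈ s, (a i + b i * t) =
      (∏ i ∈ s, a i) + t * (∑ i ∈ s, b i * ∏ l ∈ s.erase i, a l) + t ^ 2 * u := by
  classical
  induction s using Finset.induction with
  | empty => exact ⟨0, by simp⟩
  | insert i s' hni ih =>
    obtain ⟨u', hu'⟩ := ih
    refine ⟨b i * (∑ l ∈ s', b l * ∏ k ∈ s'.erase l, a k) + a i * u' + b i * t * u', ?_⟩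
    rw [Finset.prod_insert hni, hu', Finset.sum_insert hni, Finset.erase_insert hni,
      Finset.prod_insert hni]
    have hsum : ∑ j ∈ s', b j * ∏ l ∈ (insert i s').erase j, a l
        = a i * ∑ j ∈ s', b j * ∏ l ∈ s'.erase j, a l := by
      rw [Finset.mul_sum]
      refine Finset.sum_congr rfl fun j hj => ?_
      have hij : i ≠ j := by rintro rfl; exact hni hj
      rw [Finset.erase_insert_of_ne hij,
        Finset.prod_insert (fun h => hni (Finset.mem_of_mem_erase h))]
      ring
    rw [hsum]
    ring

lemma sum_exp (n : ℕ) : ∑ i ∈ range n, (2*i+2) = n*(n+1) := by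
  induction n with
  | zero => simp
  | succ k ih => rw [Finset.sum_range_succ, ih]; ring

lemma Qeq (n : ℕ) :
    ∏ j ∈ range n, (Af j - eps n) = (-1)^n * X^(n*(n+1)) * ∏ j ∈ range n, Cf j := by
  have h : ∀ j ∈ range n, Af j - eps n = (-1) * X^(2*j+2) * Cf (n-1-j) := by
    intro j hj
    rw [mem_range] at hj
    have h2 : 2*j+2 + (2*(n-1-j)+1) = 2*n+1 := by omega
    simp only [Af, Cf, eps]
    rw [mul_sub, mul_one, mul_assoc, ← pow_add, h2]
    ring
  rw [Finset.prod_congr rfl h, Finset.prod_mul_distrib, Finset.prod_mul_distrib,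
    Finset.prod_const, Finset.prod_pow_eq_pow_sum, Finset.prod_range_reflect (fun j => Cf j),
    sum_exp, card_range]

lemma P2split (n : ℕ) :
    ∏ j ∈ range (2*n), Af j =
      (∏ j ∈ range n, Af j) * ∏ j ∈ range n, (Cf j + X^(2*j+1) * eps n) := by
  rw [two_mul, Finset.prod_range_add]
  congr 1
  refine Finset.prod_congr rfl fun k hk => ?_
  simp only [Af, Cf, eps]
  rw [mul_sub, mul_one, ← pow_add, show 2*k+1 + (2*n+1) = 2*(n+k)+2 from by ring]
  ring

lemma prod_even_odd {M : Type*} [CommRing M] (f : ℕ → M) (n : ℕ) :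
    ∏ j ∈ range (2*n), f j = (∏ j ∈ range n, f (2*j)) * ∏ j ∈ range n, f (2*j+1) := by
  induction n with
  | zero => simp
  | succ k ih =>
    rw [show 2*(k+1) = 2*k+1+1 from by ring, Finset.prod_range_succ, Finset.prod_range_succ,
      ih, Finset.prod_range_succ, Finset.prod_range_succ]
    ring

lemma cop_one_sub_X_pow (m k : ℕ) (hk : 0 < k) (hkm : k < m) :
    IsCoprime (1 - X^k : Polynomial ℚ) (cyclotomic m ℚ) := by
  have h : (1 - X^k : Polynomial ℚ) = -(X^k - 1) := by ring
  rw [h]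
  refine IsCoprime.neg_left ?_
  rw [← prod_cyclotomic_eq_X_pow_sub_one hk ℚ]
  refine IsCoprime.prod_left fun d hd => ?_
  exact cyclotomic.isCoprime_rat (fun h => by
    have := Nat.le_of_dvd hk (Nat.mem_divisors.mp hd).1; omega)

lemma cop_X (m : ℕ) (hm : 1 < m) : IsCoprime (X : Polynomial ℚ) (cyclotomic m ℚ) := by
  have h0 : (cyclotomic m ℚ).coeff 0 = 1 := cyclotomic_coeff_zero ℚ hm
  have hdvd : (X : Polynomial ℚ) ∣ (cyclotomic m ℚ - 1) := by
    rw [X_dvd_iff]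
    simp [h0]
  obtain ⟨c, hc⟩ := hdvd
  exact ⟨-c, 1, by linear_combination hc⟩

lemma cyclo_dvd_eps (n : ℕ) : cyclotomic (2*n+1) ℚ ∣ eps n := by
  have h := cyclotomic.dvd_X_pow_sub_one (2*n+1) ℚ
  have : eps n = -(X^(2*n+1) - 1) := by simp [eps]
  rw [this]
  exact h.neg_right

lemma key (n : ℕ) (hn : 0 < n) :
    cyclotomic (2*n+1) ℚ ∣
      (∑ j ∈ range n, ∏ l ∈ (range n).erase j, Af l)
      + (-1)^n * X^(n*(n+1)) * ∑ j ∈ range n, X^(2*j+1) * ∏ l ∈ (range n).erase j, Cf l := by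
  have hirr : Irreducible (cyclotomic (2*n+1) ℚ) := cyclotomic.irreducible_rat (by omega)
  set I : Ideal (Polynomial ℚ) := Ideal.span {cyclotomic (2*n+1) ℚ} with hI
  haveI hmax : I.IsMaximal := PrincipalIdealRing.isMaximal_of_irreducible hirr
  letI : Field (Polynomial ℚ ⧸ I) := Ideal.Quotient.field I
  set π : Polynomial ℚ →+* (Polynomial ℚ ⧸ I) := Ideal.Quotient.mk I with hπ
  rw [← Ideal.mem_span_singleton (α := Polynomial ℚ), ← hI, ← Ideal.Quotient.eq_zero_iff_mem]
  have hπeps : π (eps n) = 0 := by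
    rw [hπ, Ideal.Quotient.eq_zero_iff_mem, hI, Ideal.mem_span_singleton]
    exact cyclo_dvd_eps n
  have hne : ∀ p : Polynomial ℚ, IsCoprime p (cyclotomic (2*n+1) ℚ) → π p ≠ 0 := by
    intro p ⟨u, v, huv⟩ hp0
    have hπc : π (cyclotomic (2*n+1) ℚ) = 0 := by
      rw [hπ, Ideal.Quotient.eq_zero_iff_mem, hI, Ideal.mem_span_singleton]
    have := congrArg π huv
    simp only [map_add, map_mul, hp0, hπc, mul_zero, map_one] at this
    simp at this
  have hA : ∀ j ∈ range n, π (Af j) ≠ 0 := by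
    intro j hj
    rw [mem_range] at hj
    exact hne _ (cop_one_sub_X_pow _ _ (by omega) (by omega))
  have hC : ∀ j ∈ range n, π (Cf j) ≠ 0 := by
    intro j hj
    rw [mem_range] at hj
    exact hne _ (cop_one_sub_X_pow _ _ (by omega) (by omega))
  have herA : ∀ j ∈ range n, π (∏ l ∈ (range n).erase j, Af l)
      = π (∏ l ∈ range n, Af l) / π (Af j) := by
    intro j hj
    rw [eq_div_iff (hA j hj), ← map_mul, Finset.prod_erase_mul _ _ hj]
  have herC : ∀ j ∈ range n, π (∏ l ∈ (range n).erase j, Cf l)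
      = π (∏ l ∈ range n, Cf l) / π (Cf j) := by
    intro j hj
    rw [eq_div_iff (hC j hj), ← map_mul, Finset.prod_erase_mul _ _ hj]
  have hPA : π (∏ l ∈ range n, Af l)
      = (-1)^n * (π X)^(n*(n+1)) * π (∏ l ∈ range n, Cf l) := by
    have h1 := congrArg π (Qeq n)
    rw [map_prod] at h1
    have h2 : ∀ j ∈ range n, π (Af j - eps n) = π (Af j) := by
      intro j _
      rw [map_sub, hπeps, sub_zero]
    rw [Finset.prod_congr rfl h2] at h1
    rw [← map_prod] at h1
    simpa only [map_mul, map_pow, map_neg, map_one] using h1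
  have hAC : ∀ j ∈ range n, (π X)^(2*j+1) * π (Af (n-1-j)) = -(π (Cf j)) := by
    intro j hj
    rw [mem_range] at hj
    have hpoly : X^(2*j+1) * Af (n-1-j) + Cf j = eps n := by
      simp only [Af, Cf, eps]
      rw [mul_sub, mul_one, ← pow_add, show 2*j+1 + (2*(n-1-j)+2) = 2*n+1 from by omega]
      ring
    have := congrArg π hpoly
    rw [map_add, map_mul, map_pow, hπeps] at this
    linear_combination this
  rw [map_add, map_sum, map_mul, map_sum, Finset.mul_sum]
  have h2nd : ∑ j ∈ range n,
      π ((-1)^n * X^(n*(n+1))) * π (X^(2*j+1) * ∏ l ∈ (range n).erase j, Cf l)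
      = ∑ j ∈ range n, -(π (∏ l ∈ range n, Af l) / π (Af (n-1-j))) := by
    refine Finset.sum_congr rfl fun j hj => ?_
    have hj' : n-1-j ∈ range n := by
      rw [mem_range] at hj ⊢; omega
    rw [map_mul, map_mul, map_pow, map_pow, map_neg, map_one, herC j hj, hPA]
    rw [map_pow]
    have h1 := hC j hj
    have h2 := hA _ hj'
    simp only [map_prod]
    field_simp
    linear_combination ((-1:Polynomial ℚ ⧸ I)^n * (π X)^(n*(n+1))
      * ∏ l ∈ range n, π (Cf l)) * hAC j hj
  rw [Finset.sum_congr rfl herA, h2nd]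
  rw [Finset.sum_neg_distrib]
  rw [Finset.sum_range_reflect (fun j => π (∏ l ∈ range n, Af l) / π (Af j)) n]
  ring

lemma W_dvd (n : ℕ) (hn : 0 < n) :
    (cyclotomic (2*n+1) ℚ)^2 ∣
      (∏ j ∈ range n, (Af j - eps n))^2
      - (-1)^n * X^(n*(n+1)) * (∏ j ∈ range n, Af j)
        * ∏ j ∈ range n, (Cf j + X^(2*j+1) * eps n) := by
  obtain ⟨u, hu⟩ := exp_lemma (range n) Af (fun _ => (-1 : Polynomial ℚ)) (eps n)
  obtain ⟨v, hv⟩ := exp_lemma (range n) Cf (fun j => X^(2*j+1)) (eps n)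
  simp only [neg_one_mul, ← sub_eq_add_neg] at hu
  rw [Finset.sum_neg_distrib] at hu
  set SA := ∑ j ∈ range n, ∏ l ∈ (range n).erase j, Af l with hSA
  set SC := ∑ j ∈ range n, X^(2*j+1) * ∏ l ∈ (range n).erase j, Cf l with hSC
  set s : Polynomial ℚ := (-1)^n * X^(n*(n+1)) with hs
  set Q := ∏ j ∈ range n, (Af j - eps n) with hQ
  set Pe := ∏ j ∈ range n, Af j with hPe
  set Po := ∏ j ∈ range n, Cf j with hPo
  set Rr := ∏ j ∈ range n, (Cf j + X^(2*j+1) * eps n) with hRr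
  have hQP : Q = s * Po := Qeq n
  have hform : Q^2 - s * Pe * Rr
      = -(eps n * (Pe * (SA + s * SC)))
        + (eps n)^2 * (SA^2 - eps n * u * SA + Q * u - s * Pe * v) := by
    linear_combination (Q - eps n * SA) * hu + (-(s*Pe)) * hv + (-Pe) * hQP.symm
  rw [hform]
  refine dvd_add (dvd_neg.mpr ?_) ?_
  · rw [pow_two]
    exact mul_dvd_mul (cyclo_dvd_eps n) (((key n hn)).mul_left Pe)
  · exact (pow_dvd_pow_of_dvd (cyclo_dvd_eps n) 2).mul_right _

lemma polyid (n : ℕ) :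
    ((∏ j ∈ range n, (Af j - eps n))^2
      - (-1)^n * X^(n*(n+1)) * (∏ j ∈ range n, Af j)
        * ∏ j ∈ range n, (Cf j + X^(2*j+1) * eps n)) * (∏ j ∈ range (2*n), Af j)
    = (∏ j ∈ range (2*n), Af j) * (∏ j ∈ range n, Cf j)^2 * (X^(n*(n+1)))^2
      - (-1)^n * X^(n*(n+1)) * (∏ j ∈ range (2*n), Af j)^2 := by
  have h1 := Qeq n
  have h2 := P2split n
  have h3 : ((-1 : Polynomial ℚ)^n)^2 = 1 := by
    rw [← pow_mul, mul_comm, pow_mul]; norm_num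
  set SQ := ∏ j ∈ range n, (Af j - eps n)
  set Pe := ∏ j ∈ range n, Af j
  set Po := ∏ j ∈ range n, Cf j
  set Rr := ∏ j ∈ range n, (Cf j + X^(2*j+1) * eps n)
  set P2 := ∏ j ∈ range (2*n), Af j
  linear_combination (P2*(SQ + (-1)^n * X^(n*(n+1))*Po)) * h1 + ((-1)^n * X^(n*(n+1))*P2) * h2
    + (P2*(X^(n*(n+1)))^2*Po^2) * h3

lemma ratfunc_cong (x : RatFunc ℚ) (P a b : Polynomial ℚ)
    (hco : IsCoprime b P)
    (h : x * algebraMap (Polynomial ℚ) (RatFunc ℚ) b = algebraMap _ _ (P * a)) :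
    P ∣ x.num ∧ IsCoprime x.denom P := by
  have hd0 : x.denom ≠ 0 := x.denom_ne_zero
  have h2 := h
  rw [← RatFunc.num_div_denom x, div_mul_eq_mul_div,
    div_eq_iff (RatFunc.algebraMap_ne_zero hd0), ← map_mul, ← map_mul] at h2
  have hpoly : x.num * b = P * a * x.denom := RatFunc.algebraMap_injective ℚ h2
  have hcop : IsCoprime x.denom x.num := (RatFunc.isCoprime_num_denom x).symm
  have hdb : x.denom ∣ b :=
    hcop.dvd_of_dvd_mul_left ⟨P * a, by linear_combination hpoly⟩
  refine ⟨(hco.symm).dvd_of_dvd_mul_right ⟨a * x.denom, by linear_combination hpoly⟩,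
    IsCoprime.of_isCoprime_of_dvd_left hco hdb⟩

lemma qpoch_sq (M : ℕ) :
    qpoch (q^2) (q^2) M = algebraMap (Polynomial ℚ) (RatFunc ℚ) (∏ j ∈ range M, Af j) := by
  rw [qpoch, map_prod]
  refine Finset.prod_congr rfl fun j _ => ?_
  simp only [Af, q, map_sub, map_one, map_pow, RatFunc.algebraMap_X]
  ring

lemma Af_ne (j : ℕ) : Af j ≠ 0 := by
  have h1 := X_pow_sub_C_ne_zero (R := ℚ) (show 0 < 2*j+2 by omega) 1
  intro h
  apply h1
  rw [map_one]
  unfold Af at h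
  linear_combination -h

lemma Cf_ne (j : ℕ) : Cf j ≠ 0 := by
  have h1 := X_pow_sub_C_ne_zero (R := ℚ) (show 0 < 2*j+1 by omega) 1
  intro h
  apply h1
  rw [map_one]
  unfold Cf at h
  linear_combination -h

lemma div_identity {F : Type*} [Field F] (p2 pe po t c w2 : F)
    (hpe : pe ≠ 0) (hpo : po ≠ 0) (ht : t ≠ 0)
    (hid : w2 * p2 = p2 * po^2 * t^2 - c * t * p2^2) :
    (p2/(pe*pe) - c * t⁻¹ * (p2/(po*pe))^2) * (pe^2*po^2*t^2) = w2 * p2 := by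
  field_simp
  linear_combination (-1) * hid

theorem q_half_binom_congr (m : ℕ) (hm : 0 < m) (hodd : Odd m) :
    congrMod (qbin (q ^ 2) (m - 1) ((m - 1) / 2))
      ((-1) ^ ((m - 1) / 2) * q ^ ((1 - (m : ℤ) ^ 2) / 4) * qpoch (-q) q (m - 1) ^ 2)
      (Polynomial.cyclotomic m ℚ ^ 2) := by
  obtain ⟨n, hn0⟩ := hodd
  have hn : m = 2*n+1 := by omega
  have hm1 : m - 1 = 2*n := by omega
  have hm2 : (m-1)/2 = n := by omega
  rw [hm2, hm1]
  rcases Nat.eq_zero_or_pos n with h0 | hpos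
  · subst h0
    have hme : m = 1 := by omega
    subst hme
    have hexp : ((1 - ((1:ℕ) : ℤ)^2)/4) = 0 := by norm_num
    simp only [hexp, congrMod, qbin, qpoch, mul_zero, Nat.mul_zero, range_zero, prod_empty,
      pow_zero, zpow_zero, le_refl, if_true, Nat.sub_zero, one_mul, mul_one]
    norm_num
    exact isCoprime_one_left
  · rw [hn]
    set N := n*(n+1) with hNdef
    set Pe := ∏ j ∈ range n, Af j with hPedef
    set Po := ∏ j ∈ range n, Cf j with hPodef
    set P2 := ∏ j ∈ range (2*n), Af j with hP2def
    have hPe_ne : Pe ≠ 0 := Finset.prod_ne_zero_iff.mpr fun j _ => Af_ne j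
    have hPo_ne : Po ≠ 0 := Finset.prod_ne_zero_iff.mpr fun j _ => Cf_ne j
    have hqbin : qbin (q^2) (2*n) n
        = algebraMap (Polynomial ℚ) (RatFunc ℚ) P2
          / (algebraMap (Polynomial ℚ) (RatFunc ℚ) Pe * algebraMap (Polynomial ℚ) (RatFunc ℚ) Pe) := by
      rw [qbin, if_pos (by omega), show 2*n - n = n from by omega, qpoch_sq, qpoch_sq]
    have hPoPe : algebraMap (Polynomial ℚ) (RatFunc ℚ) Po * algebraMap (Polynomial ℚ) (RatFunc ℚ) Pe
        = ∏ j ∈ range (2*n), (1 - q^(j+1)) := by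
      rw [hPodef, hPedef, map_prod, map_prod, prod_even_odd (fun j => 1 - q^(j+1)) n]
      congr 1 <;> refine Finset.prod_congr rfl fun j _ => ?_ <;>
        simp only [Cf, Af, q, map_sub, map_one, map_pow, RatFunc.algebraMap_X]
    have hN : qpoch (-q) q (2*n) * algebraMap (Polynomial ℚ) (RatFunc ℚ) (Po * Pe)
        = algebraMap (Polynomial ℚ) (RatFunc ℚ) P2 := by
      rw [map_mul, hPoPe, qpoch, ← Finset.prod_mul_distrib, hP2def, map_prod]
      refine Finset.prod_congr rfl fun j _ => ?_
      simp only [Af, q, map_sub, map_one, map_pow, RatFunc.algebraMap_X]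
      ring
    have hPoPe_ne : algebraMap (Polynomial ℚ) (RatFunc ℚ) (Po * Pe) ≠ 0 :=
      RatFunc.algebraMap_ne_zero (mul_ne_zero hPo_ne hPe_ne)
    have hqp : qpoch (-q) q (2*n)
        = algebraMap (Polynomial ℚ) (RatFunc ℚ) P2 / algebraMap (Polynomial ℚ) (RatFunc ℚ) (Po * Pe) :=
      (eq_div_iff hPoPe_ne).mpr hN
    have hzexp : q ^ ((1 - (((2*n+1 : ℕ)) : ℤ)^2)/4)
        = (algebraMap (Polynomial ℚ) (RatFunc ℚ) (X^N))⁻¹ := by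
      have h4 : (1 - (((2*n+1:ℕ)) : ℤ)^2) = 4 * (-((N : ℕ) : ℤ)) := by
        rw [hNdef]; push_cast; ring
      rw [h4, Int.mul_ediv_cancel_left _ (by norm_num), zpow_neg, zpow_natCast, map_pow,
        RatFunc.algebraMap_X, q]
    obtain ⟨w, hw⟩ := W_dvd n hpos
    rw [← hNdef, ← hPedef] at hw
    have hWP : (cyclotomic (2*n+1) ℚ)^2 * (w * P2)
        = ((∏ j ∈ range n, (Af j - eps n))^2
            - (-1)^n * X^N * Pe * ∏ j ∈ range n, (Cf j + X^(2*j+1) * eps n)) * P2 := by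
      linear_combination (-P2) * hw
    refine ratfunc_cong _ ((cyclotomic (2*n+1) ℚ)^2) (w * P2) (Pe^2*Po^2*(X^N)^2) ?_ ?_
    · have hPeco : IsCoprime Pe (cyclotomic (2*n+1) ℚ) := by
        refine IsCoprime.prod_left fun j hj => ?_
        rw [mem_range] at hj
        have := cop_one_sub_X_pow (2*n+1) (2*j+2) (by omega) (by omega)
        simpa [Af] using this
      have hPoco : IsCoprime Po (cyclotomic (2*n+1) ℚ) := by
        refine IsCoprime.prod_left fun j hj => ?_
        rw [mem_range] at hj
        have := cop_one_sub_X_pow (2*n+1) (2*j+1) (by omega) (by omega)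
        simpa [Cf] using this
      have hXco : IsCoprime (X : Polynomial ℚ) (cyclotomic (2*n+1) ℚ) := cop_X _ (by omega)
      exact (((hPeco.pow_left).mul_left (hPoco.pow_left)).mul_left ((hXco.pow_left).pow_left)).pow_right
    · rw [hqbin, hzexp, hqp, hWP]
      have h1 : algebraMap (Polynomial ℚ) (RatFunc ℚ) Pe ≠ 0 := RatFunc.algebraMap_ne_zero hPe_ne
      have h2 : algebraMap (Polynomial ℚ) (RatFunc ℚ) Po ≠ 0 := RatFunc.algebraMap_ne_zero hPo_ne
      have h3 : algebraMap (Polynomial ℚ) (RatFunc ℚ) (X : Polynomial ℚ) ≠ 0 :=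
        RatFunc.algebraMap_ne_zero X_ne_zero
      have hid : algebraMap (Polynomial ℚ) (RatFunc ℚ)
            ((∏ j ∈ range n, (Af j - eps n))^2
              - (-1)^n * X^N * Pe * ∏ j ∈ range n, (Cf j + X^(2*j+1) * eps n))
            * algebraMap (Polynomial ℚ) (RatFunc ℚ) P2
          = algebraMap (Polynomial ℚ) (RatFunc ℚ) P2
              * (algebraMap (Polynomial ℚ) (RatFunc ℚ) Po)^2
              * ((algebraMap (Polynomial ℚ) (RatFunc ℚ) X)^N)^2
            - (-1)^n * (algebraMap (Polynomial ℚ) (RatFunc ℚ) X)^N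
              * (algebraMap (Polynomial ℚ) (RatFunc ℚ) P2)^2 := by
        have hid0 := congrArg (algebraMap (Polynomial ℚ) (RatFunc ℚ)) (polyid n)
        rw [← hNdef, ← hPedef, ← hPodef, ← hP2def] at hid0
        simp only [map_mul, map_sub, map_pow, map_neg, map_one] at hid0 ⊢
        linear_combination hid0
      have hfin := div_identity (algebraMap (Polynomial ℚ) (RatFunc ℚ) P2)
        (algebraMap (Polynomial ℚ) (RatFunc ℚ) Pe) (algebraMap (Polynomial ℚ) (RatFunc ℚ) Po)
        ((algebraMap (Polynomial ℚ) (RatFunc ℚ) X)^N) ((-1)^n)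
        (algebraMap (Polynomial ℚ) (RatFunc ℚ)
          ((∏ j ∈ range n, (Af j - eps n))^2
            - (-1)^n * X^N * Pe * ∏ j ∈ range n, (Cf j + X^(2*j+1) * eps n)))
        h1 h2 (pow_ne_zero _ h3) hid
      simp only [map_mul, map_pow] at hfin ⊢
      exact hfin
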